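/- Analytic solution via the simplified dual: Let S⁺_{ςσ₁} = {(ς,σ₁) ∈ ℝ×ℝⁿ : ς ≥ −α, σ₁ ≥ 0 componentwise, G(ς,σ₁) is positive definite, and fᵢ+σ₁ᵢ ≠ 0 for all i}. If (ς̄,σ̄₁) ∈ S⁺_{ςσ₁} is a critical point of P^g (the Fréchet derivative of (ς,σ₁) ↦ P^g(ς,σ₁) vanishes at (ς̄,σ̄₁)), then the pair (x̄,v̄) with x̄ = G(ς̄,σ̄₁)⁻¹ c and v̄ᵢ = 1 if fᵢ+σ̄₁ᵢ > 0 and v̄ᵢ = 0 if fᵢ+σ̄₁ᵢ < 0, belongs to X_v and is a global minimizer of P over X_v. -/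

import Mathlib

open Matrix BigOperators

/-- `G(ς,σ₁) = A + ς B + 2 diag(σ₁)`. -/
noncomputable def Gm {n : ℕ} (A B : Matrix (Fin n) (Fin n) ℝ) (ς : ℝ) (σ₁ : Fin n → ℝ) :
    Matrix (Fin n) (Fin n) ℝ :=
  A + ς • B + (2 : ℝ) • Matrix.diagonal σ₁

/-- The primal objective `P(x,v)`. -/
noncomputable def Pobj {n : ℕ} (A B : Matrix (Fin n) (Fin n) ℝ) (α : ℝ) (c f : Fin n → ℝ)
    (x v : Fin n → ℝ) : ℝ :=
  (1/2) * (x ⬝ᵥ A.mulVec x) - c ⬝ᵥ x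
    + (1/2) * ((1/2) * (x ⬝ᵥ B.mulVec x) - α)^2 - f ⬝ᵥ v

/-- The primal feasible set `X_v`. -/
def Xv (n : ℕ) : Set ((Fin n → ℝ) × (Fin n → ℝ)) :=
  {p | ∀ i, (p.2 i = 0 ∨ p.2 i = 1) ∧ -p.2 i ≤ p.1 i ∧ p.1 i ≤ p.2 i}

/-- The simplified dual function `P^g`, as a function of the pair `(ς,σ₁)`. -/
noncomputable def PgFun {n : ℕ} (A B : Matrix (Fin n) (Fin n) ℝ) (α : ℝ) (c f : Fin n → ℝ)
    (q : ℝ × (Fin n → ℝ)) : ℝ :=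
  -(1/2) * (c ⬝ᵥ (Gm A B q.1 q.2)⁻¹.mulVec c)
    - ∑ i, max (f i + q.2 i) 0
    - (1/2) * q.1^2 - α * q.1

/-- The simplified dual feasible set `S⁺_{ςσ₁}`. -/
def Sg {n : ℕ} (A B : Matrix (Fin n) (Fin n) ℝ) (α : ℝ) (f : Fin n → ℝ) :
    Set (ℝ × (Fin n → ℝ)) :=
  {q | -α ≤ q.1 ∧ (∀ i, 0 ≤ q.2 i) ∧ (Gm A B q.1 q.2).PosDef ∧ ∀ i, f i + q.2 i ≠ 0}

attribute [local instance] Matrix.linftyOpNormedRing Matrix.linftyOpNormedAlgebra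

section
variable {n : ℕ} (A B : Matrix (Fin n) (Fin n) ℝ) (c f : Fin n → ℝ)

/-- the linear part of `Gm` as a continuous linear map -/
noncomputable def PsiC (B : Matrix (Fin n) (Fin n) ℝ) :
    (ℝ × (Fin n → ℝ)) →L[ℝ] Matrix (Fin n) (Fin n) ℝ :=
  LinearMap.toContinuousLinearMap
  { toFun := fun q => q.1 • B + (2:ℝ) • Matrix.diagonal q.2
    map_add' := by
      intro p q
      have : Matrix.diagonal (p.2 + q.2) = Matrix.diagonal p.2 + Matrix.diagonal q.2 := by
        rw [Matrix.diagonal_add]; rfl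
      simp only [Prod.fst_add, Prod.snd_add, add_smul, this, smul_add]
      abel
    map_smul' := by
      intro r q
      simp only [Prod.smul_fst, Prod.smul_snd, Matrix.diagonal_smul, smul_smul, smul_add,
        smul_eq_mul, RingHom.id_apply]
      ring_nf }

@[simp] lemma PsiC_apply (q : ℝ × (Fin n → ℝ)) :
    PsiC B q = q.1 • B + (2:ℝ) • Matrix.diagonal q.2 := rfl

/-- `M ↦ c ⬝ᵥ M *ᵥ c` as a continuous linear map. -/
noncomputable def phiC (c : Fin n → ℝ) :
    Matrix (Fin n) (Fin n) ℝ →L[ℝ] ℝ :=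
  LinearMap.toContinuousLinearMap
  { toFun := fun M => c ⬝ᵥ M.mulVec c
    map_add' := by intro M N; simp [Matrix.add_mulVec, dotProduct_add]
    map_smul' := by intro r M; simp [Matrix.smul_mulVec, dotProduct_smul] }

@[simp] lemma phiC_apply (M : Matrix (Fin n) (Fin n) ℝ) :
    phiC c M = c ⬝ᵥ M.mulVec c := rfl

end

section deriv
variable {n : ℕ} {A B : Matrix (Fin n) (Fin n) ℝ} {c f : Fin n → ℝ} {α ςb : ℝ} {σ1b : Fin n → ℝ}

/-- the coordinatewise linear map for the max-part -/
noncomputable def rhoC (f σ1b : Fin n → ℝ) :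
    (ℝ × (Fin n → ℝ)) →L[ℝ] ℝ :=
  LinearMap.toContinuousLinearMap
  { toFun := fun q => ∑ i, if 0 < f i + σ1b i then q.2 i else 0
    map_add' := by
      intro p q
      rw [← Finset.sum_add_distrib]
      refine Finset.sum_congr rfl fun i _ => ?_
      by_cases h : 0 < f i + σ1b i <;> simp [h]
    map_smul' := by
      intro r q
      show (∑ i, if 0 < f i + σ1b i then (r • q).2 i else 0)
        = r * ∑ i, if 0 < f i + σ1b i then q.2 i else 0
      rw [Finset.mul_sum]
      refine Finset.sum_congr rfl fun i _ => ?_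
      by_cases h : 0 < f i + σ1b i <;> simp [h] }

@[simp] lemma rhoC_apply (q : ℝ × (Fin n → ℝ)) :
    rhoC f σ1b q = ∑ i, if 0 < f i + σ1b i then q.2 i else 0 := rfl

lemma hasFDerivAt_PgFun (hG : (Gm A B ςb σ1b).PosDef) (hf : ∀ i, f i + σ1b i ≠ 0) :
    HasFDerivAt (PgFun A B α c f)
      ((-(1/2) : ℝ) • ((phiC c).comp
          ((-(ContinuousLinearMap.mulLeftRight ℝ _ (Gm A B ςb σ1b)⁻¹ (Gm A B ςb σ1b)⁻¹)).comp
            (PsiC B)))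
        - rhoC f σ1b - ((1/2) * (2 * ςb ^ 1)) • ContinuousLinearMap.fst ℝ ℝ (Fin n → ℝ)
        - (α * 1) • ContinuousLinearMap.fst ℝ ℝ (Fin n → ℝ)) (ςb, σ1b) := by
  set G := Gm A B ςb σ1b with hGdef
  have hu : IsUnit G := by
    rw [Matrix.isUnit_iff_isUnit_det]
    exact hG.det_pos.ne'.isUnit
  -- part 1 : the inverse part
  have hGm : HasFDerivAt (fun q : ℝ × (Fin n → ℝ) => Gm A B q.1 q.2) (PsiC B) (ςb, σ1b) := by
    have : (fun q : ℝ × (Fin n → ℝ) => Gm A B q.1 q.2) = fun q => A + PsiC B q := by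
      funext q; simp [Gm, add_assoc]
    rw [this]
    exact (PsiC B).hasFDerivAt.const_add A
  have hGi : ((hu.unit⁻¹ : (Matrix (Fin n) (Fin n) ℝ)ˣ) : Matrix (Fin n) (Fin n) ℝ) = G⁻¹ := by
    refine (Matrix.inv_eq_left_inv ?_).symm
    have h := hu.unit.inv_mul
    rwa [IsUnit.unit_spec] at h
  have hinv : HasFDerivAt Ring.inverse
      (-(ContinuousLinearMap.mulLeftRight ℝ _ G⁻¹ G⁻¹)) G := by
    have := hasFDerivAt_ringInverse (𝕜 := ℝ) hu.unit
    rwa [hGi, hu.unit_spec] at this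
  have h1 : HasFDerivAt
      (fun q : ℝ × (Fin n → ℝ) => -(1/2) * (phiC c (Ring.inverse (Gm A B q.1 q.2))))
      ((-(1/2) : ℝ) • ((phiC c).comp
          ((-(ContinuousLinearMap.mulLeftRight ℝ _ G⁻¹ G⁻¹)).comp (PsiC B)))) (ςb, σ1b) := by
    have h2 : HasFDerivAt (fun q : ℝ × (Fin n → ℝ) => Ring.inverse (Gm A B q.1 q.2))
        ((-(ContinuousLinearMap.mulLeftRight ℝ _ G⁻¹ G⁻¹)).comp (PsiC B)) (ςb, σ1b) :=
      HasFDerivAt.comp (g := Ring.inverse) (ςb, σ1b) hinv hGm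
    have h3 := ((phiC c).hasFDerivAt.comp (ςb, σ1b) h2)
    exact h3.const_mul (-(1/2) : ℝ)
  -- part 2 : the max part, locally
  have h2loc : HasFDerivAt
      (fun q : ℝ × (Fin n → ℝ) => ∑ i, max (f i + q.2 i) 0) (rhoC f σ1b) (ςb, σ1b) := by
    have hlin : HasFDerivAt
        (fun q : ℝ × (Fin n → ℝ) => (∑ i, if 0 < f i + σ1b i then f i else 0) + rhoC f σ1b q)
        (rhoC f σ1b) (ςb, σ1b) := (rhoC f σ1b).hasFDerivAt.const_add _
    refine hlin.congr_of_eventuallyEq ?_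
    -- eventually, each max picks the fixed branch
    have hev : ∀ᶠ q : ℝ × (Fin n → ℝ) in nhds (ςb, σ1b), ∀ i,
        max (f i + q.2 i) 0 = if 0 < f i + σ1b i then f i + q.2 i else 0 := by
      rw [Filter.eventually_all]
      intro i
      have hc : Continuous (fun q : ℝ × (Fin n → ℝ) => f i + q.2 i) := by fun_prop
      rcases lt_or_gt_of_ne (hf i) with hneg | hpos
      · have : ∀ᶠ q : ℝ × (Fin n → ℝ) in nhds (ςb, σ1b), f i + q.2 i < 0 :=
          hc.continuousAt.eventually_lt continuousAt_const hneg
        filter_upwards [this] with q hq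
        rw [if_neg (by linarith), max_eq_right hq.le]
      · have : ∀ᶠ q : ℝ × (Fin n → ℝ) in nhds (ςb, σ1b), 0 < f i + q.2 i :=
          continuousAt_const.eventually_lt hc.continuousAt hpos
        filter_upwards [this] with q hq
        rw [if_pos hpos, max_eq_left hq.le]
    filter_upwards [hev] with q hq
    rw [Finset.sum_congr rfl fun i _ => hq i]
    rw [rhoC_apply, ← Finset.sum_add_distrib]
    refine Finset.sum_congr rfl fun i _ => ?_
    by_cases h : 0 < f i + σ1b i <;> simp [h]
  -- part 3 : scalar parts
  have h3 : HasFDerivAt (fun q : ℝ × (Fin n → ℝ) => (1/2) * q.1 ^ 2)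
      (((1/2) * (2 * ςb ^ 1)) • ContinuousLinearMap.fst ℝ ℝ (Fin n → ℝ)) (ςb, σ1b) := by
    have h3' := ((hasDerivAt_pow 2 ςb).const_mul (1/2)).comp_hasFDerivAt (ςb, σ1b)
      (hasFDerivAt_fst (𝕜 := ℝ) (p := (ςb, σ1b)))
    exact h3'.congr_fderiv (by norm_num)
  have h4 : HasFDerivAt (fun q : ℝ × (Fin n → ℝ) => α * q.1)
      ((α * 1) • ContinuousLinearMap.fst ℝ ℝ (Fin n → ℝ)) (ςb, σ1b) := by
    exact ((hasDerivAt_id ςb).const_mul α).comp_hasFDerivAt (ςb, σ1b) (hasFDerivAt_fst (𝕜 := ℝ) (p := (ςb, σ1b)))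
  have := ((h1.sub h2loc).sub h3).sub h4
  refine this.congr_of_eventuallyEq (Filter.Eventually.of_forall fun q => ?_)
  simp [PgFun, Matrix.nonsing_inv_eq_ringInverse]

end deriv

lemma comp_PsiC_apply {n : ℕ} (B : Matrix (Fin n) (Fin n) ℝ) (c : Fin n → ℝ)
    (G : Matrix (Fin n) (Fin n) ℝ) (dq : ℝ × (Fin n → ℝ)) :
    ((phiC c).comp ((-(ContinuousLinearMap.mulLeftRight ℝ _ G G)).comp (PsiC B))) dq
      = c ⬝ᵥ (-(G * PsiC B dq * G)).mulVec c := rfl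

section extract
variable {n : ℕ} {A B : Matrix (Fin n) (Fin n) ℝ} {c f : Fin n → ℝ} {α ςb : ℝ} {σ1b : Fin n → ℝ}

lemma Gsymm (hA : A.IsSymm) (hB : B.PosSemidef) : (Gm A B ςb σ1b).IsSymm := by
  have hBs : B.IsSymm := by
    have h := hB.isHermitian
    rwa [Matrix.IsHermitian, Matrix.conjTranspose_eq_transpose_of_trivial] at h
  simp only [Gm, Matrix.IsSymm, Matrix.transpose_add, Matrix.transpose_smul,
    Matrix.diagonal_transpose, hA.eq, hBs.eq]

lemma dot_inv_sandwich (hGs : (Gm A B ςb σ1b).IsSymm) (M : Matrix (Fin n) (Fin n) ℝ) :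
    c ⬝ᵥ ((Gm A B ςb σ1b)⁻¹ * M * (Gm A B ςb σ1b)⁻¹).mulVec c
      = ((Gm A B ςb σ1b)⁻¹.mulVec c) ⬝ᵥ M.mulVec ((Gm A B ςb σ1b)⁻¹.mulVec c) := by
  set G := Gm A B ςb σ1b
  have hGi : G⁻¹ᵀ = G⁻¹ := by rw [Matrix.transpose_nonsing_inv, hGs.eq]
  rw [← Matrix.mulVec_mulVec, ← Matrix.mulVec_mulVec, Matrix.dotProduct_mulVec,
    ← Matrix.mulVec_transpose, hGi]

lemma critical_eqs (hA : A.IsSymm) (hB : B.PosSemidef)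
    (hG : (Gm A B ςb σ1b).PosDef) (hf : ∀ i, f i + σ1b i ≠ 0)
    (hcrit : fderiv ℝ (PgFun A B α c f) (ςb, σ1b) = 0)
    {xb : Fin n → ℝ} (hx : xb = (Gm A B ςb σ1b)⁻¹.mulVec c) :
    (1/2) * (xb ⬝ᵥ B.mulVec xb) - α = ςb ∧
      ∀ i, xb i ^ 2 = if 0 < f i + σ1b i then 1 else 0 := by
  have hd := hasFDerivAt_PgFun (α := α) (c := c) hG hf
  have hL := hd.fderiv
  rw [hcrit] at hL
  have hL0 : ∀ dq, (0 : (ℝ × (Fin n → ℝ)) →L[ℝ] ℝ) dq = 0 := fun dq => rfl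
  have key : ∀ dq : ℝ × (Fin n → ℝ),
      ((-(1/2) : ℝ) • ((phiC c).comp
          ((-(ContinuousLinearMap.mulLeftRight ℝ _ (Gm A B ςb σ1b)⁻¹ (Gm A B ςb σ1b)⁻¹)).comp
            (PsiC B)))
        - rhoC f σ1b - ((1/2) * (2 * ςb ^ 1)) • ContinuousLinearMap.fst ℝ ℝ (Fin n → ℝ)
        - (α * 1) • ContinuousLinearMap.fst ℝ ℝ (Fin n → ℝ)) dq = 0 := by
    intro dq; rw [← hL]; rfl
  have hGs := Gsymm (ςb := ςb) (σ1b := σ1b) hA hB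
  constructor
  · have h := key (1, 0)
    simp only [ContinuousLinearMap.sub_apply, ContinuousLinearMap.smul_apply,
      comp_PsiC_apply, ContinuousLinearMap.neg_apply,
      ContinuousLinearMap.coe_fst', ContinuousLinearMap.mulLeftRight_apply,
      PsiC_apply, rhoC_apply, phiC_apply, smul_eq_mul, one_smul,
      Matrix.diagonal_zero, smul_zero, add_zero, Pi.zero_apply] at h
    rw [show B + (2:ℝ) • Matrix.diagonal (0 : Fin n → ℝ) = B from by
      rw [show Matrix.diagonal (0 : Fin n → ℝ) = 0 from by
        ext i j; rw [Matrix.diagonal_apply]; simp]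
      simp] at h
    have hsw := dot_inv_sandwich (c := c) hGs B
    rw [← hx] at hsw
    rw [Matrix.neg_mulVec, dotProduct_neg, hsw] at h
    simp only [ite_self, Finset.sum_const_zero, mul_one, pow_one] at h
    ring_nf at h ⊢
    linarith
  · intro i
    have h := key (0, Pi.single i 1)
    simp only [ContinuousLinearMap.sub_apply, ContinuousLinearMap.smul_apply,
      comp_PsiC_apply, ContinuousLinearMap.neg_apply,
      ContinuousLinearMap.coe_fst', ContinuousLinearMap.mulLeftRight_apply,
      PsiC_apply, rhoC_apply, phiC_apply, smul_eq_mul, zero_smul, zero_add,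
      mul_zero, sub_zero] at h
    have hsw := dot_inv_sandwich (c := c) hGs ((2:ℝ) • Matrix.diagonal (Pi.single i 1))
    rw [← hx] at hsw
    rw [Matrix.neg_mulVec, dotProduct_neg, hsw] at h
    have hdiag : xb ⬝ᵥ ((2:ℝ) • Matrix.diagonal (Pi.single i 1)).mulVec xb
        = 2 * xb i ^ 2 := by
      rw [Matrix.smul_mulVec, dotProduct_smul]
      have hds : (Matrix.diagonal (Pi.single i 1)).mulVec xb = Pi.single i (xb i) := by
        funext j
        rw [Matrix.mulVec_diagonal]
        by_cases hij : j = i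
        · subst hij; simp
        · simp [Pi.single_eq_of_ne hij]
      rw [hds, dotProduct_single, smul_eq_mul]
      ring
    rw [hdiag] at h
    have hrho : (∑ j, if 0 < f j + σ1b j then (Pi.single i (1:ℝ)) j else 0)
        = if 0 < f i + σ1b i then 1 else 0 := by
      rw [Finset.sum_eq_single i]
      · simp
      · intro j _ hji
        by_cases hj : 0 < f j + σ1b j <;> simp [hj, Pi.single_eq_of_ne hji]
      · simp
    rw [hrho] at h
    by_cases hi : 0 < f i + σ1b i
    · rw [if_pos hi] at h ⊢; ring_nf at h ⊢; linarith
    · rw [if_neg hi] at h ⊢; ring_nf at h ⊢; linarith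

end extract

section primal
variable {n : ℕ} {A B : Matrix (Fin n) (Fin n) ℝ} {c f : Fin n → ℝ} {ςb : ℝ} {σ1b : Fin n → ℝ}

lemma quadG (x : Fin n → ℝ) :
    x ⬝ᵥ (Gm A B ςb σ1b).mulVec x
      = x ⬝ᵥ A.mulVec x + ςb * (x ⬝ᵥ B.mulVec x) + 2 * ∑ i, σ1b i * x i ^ 2 := by
  have hdiag : x ⬝ᵥ (Matrix.diagonal σ1b).mulVec x = ∑ i, σ1b i * x i ^ 2 := by
    simp only [dotProduct, Matrix.mulVec_diagonal]
    refine Finset.sum_congr rfl fun i _ => by ring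
  simp only [Gm, Matrix.add_mulVec, Matrix.smul_mulVec, dotProduct_add,
    dotProduct_smul, smul_eq_mul, hdiag]

lemma quadmin (hG : (Gm A B ςb σ1b).PosDef) (hGs : (Gm A B ςb σ1b).IsSymm)
    {xb : Fin n → ℝ} (hGx : (Gm A B ςb σ1b).mulVec xb = c) (x : Fin n → ℝ) :
    (1/2) * (xb ⬝ᵥ (Gm A B ςb σ1b).mulVec xb) - c ⬝ᵥ xb
      ≤ (1/2) * (x ⬝ᵥ (Gm A B ςb σ1b).mulVec x) - c ⬝ᵥ x := by
  set G := Gm A B ςb σ1b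
  have h0 := hG.posSemidef.dotProduct_mulVec_nonneg (x - xb)
  rw [star_trivial] at h0
  have hswap : xb ⬝ᵥ G.mulVec x = c ⬝ᵥ x := by
    rw [Matrix.dotProduct_mulVec, ← Matrix.mulVec_transpose, hGs.eq, hGx]
  have hswap2 : x ⬝ᵥ G.mulVec xb = c ⬝ᵥ x := by rw [hGx, dotProduct_comm]
  have hxbxb : xb ⬝ᵥ G.mulVec xb = c ⬝ᵥ xb := by rw [hGx, dotProduct_comm]
  rw [Matrix.mulVec_sub, sub_dotProduct, dotProduct_sub, dotProduct_sub] at h0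
  linarith

end primal

set_option maxHeartbeats 1000000 in

set_option maxHeartbeats 1000000 in
theorem analytic_solution_simplified_dual {n : ℕ} (hn : 0 < n)
    (A B : Matrix (Fin n) (Fin n) ℝ) (hA : A.IsSymm) (hB : B.PosSemidef)
    (α : ℝ) (hα : 0 < α) (c f : Fin n → ℝ)
    (ςb : ℝ) (σ1b : Fin n → ℝ)
    (hmem : (ςb, σ1b) ∈ Sg A B α f)
    (hcrit : fderiv ℝ (PgFun A B α c f) (ςb, σ1b) = 0)
    (xb vb : Fin n → ℝ)
    (hx : xb = (Gm A B ςb σ1b)⁻¹.mulVec c)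
    (hv : ∀ i, (0 < f i + σ1b i → vb i = 1) ∧ (f i + σ1b i < 0 → vb i = 0)) :
    (xb, vb) ∈ Xv n ∧
    ∀ q ∈ Xv n, Pobj A B α c f xb vb ≤ Pobj A B α c f q.1 q.2 := by
  obtain ⟨hς, hσ, hG, hf⟩ := hmem
  have hGs := Gsymm (ςb := ςb) (σ1b := σ1b) hA hB
  obtain ⟨eqa, eqb⟩ := critical_eqs (α := α) hA hB hG hf hcrit hx
  have hu : IsUnit (Gm A B ςb σ1b).det := hG.det_pos.ne'.isUnit
  have hGx : (Gm A B ςb σ1b).mulVec xb = c := by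
    rw [hx, Matrix.mulVec_mulVec, Matrix.mul_nonsing_inv _ hu, Matrix.one_mulVec]
  -- feasibility data
  have hfeas : ∀ i, (vb i = 0 ∨ vb i = 1) ∧ -vb i ≤ xb i ∧ xb i ≤ vb i := by
    intro i
    rcases lt_or_gt_of_ne (hf i) with hneg | hpos
    · have hv0 : vb i = 0 := (hv i).2 hneg
      have hx2 : xb i ^ 2 = 0 := by rw [eqb i, if_neg (by linarith)]
      have hx0 : xb i = 0 := by
        have := pow_eq_zero_iff (n := 2) (by norm_num) |>.mp hx2
        exact this
      exact ⟨Or.inl hv0, by rw [hv0, hx0]; norm_num⟩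
    · have hv1 : vb i = 1 := (hv i).1 hpos
      have hx2 : xb i ^ 2 = 1 := by rw [eqb i, if_pos hpos]
      refine ⟨Or.inr hv1, by rw [hv1]; constructor <;>
        nlinarith [hx2, sq_nonneg (xb i - 1), sq_nonneg (xb i + 1)]⟩
  refine ⟨hfeas, ?_⟩
  rintro ⟨x, v⟩ hq
  replace hq : ∀ i, (v i = 0 ∨ v i = 1) ∧ -v i ≤ x i ∧ x i ≤ v i := hq
  simp only
  -- abbreviations
  have hquadx := quadG (A := A) (B := B) (ςb := ςb) (σ1b := σ1b) x
  have hquadxb := quadG (A := A) (B := B) (ςb := ςb) (σ1b := σ1b) xb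
  have h3 := quadmin hG hGs hGx x
  -- x i ^ 2 ≤ v i
  have hx2v : ∀ i, σ1b i * x i ^ 2 ≤ σ1b i * v i := by
    intro i
    obtain ⟨hv01, hl, hr⟩ := hq i
    refine mul_le_mul_of_nonneg_left ?_ (hσ i)
    rcases hv01 with h0 | h1
    · rw [h0] at hl hr ⊢; nlinarith
    · rw [h1] at hl hr ⊢; nlinarith
  have sumF1 : ∑ i, σ1b i * x i ^ 2 ≤ ∑ i, σ1b i * v i :=
    Finset.sum_le_sum fun i _ => hx2v i
  have sumF2 : ∑ i, (f i * v i + σ1b i * v i) ≤ ∑ i, max (f i + σ1b i) 0 := by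
    refine Finset.sum_le_sum fun i _ => ?_
    obtain ⟨hv01, _, _⟩ := hq i
    rcases hv01 with h0 | h1
    · rw [h0]; simpa using le_max_right (f i + σ1b i) 0
    · rw [h1]; simpa using le_max_left (f i + σ1b i) 0
  have sumE1 : ∑ i, (σ1b i * xb i ^ 2 + f i * vb i) = ∑ i, max (f i + σ1b i) 0 := by
    refine Finset.sum_congr rfl fun i _ => ?_
    rcases lt_or_gt_of_ne (hf i) with hneg | hpos
    · rw [(hv i).2 hneg, eqb i, if_neg (by linarith), max_eq_right hneg.le]; ring
    · rw [(hv i).1 hpos, eqb i, if_pos hpos, max_eq_left hpos.le]; ring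
  have hsplit1 : ∑ i, (f i * v i + σ1b i * v i) = (∑ i, f i * v i) + ∑ i, σ1b i * v i :=
    Finset.sum_add_distrib
  have hsplit2 : ∑ i, (σ1b i * xb i ^ 2 + f i * vb i)
      = (∑ i, σ1b i * xb i ^ 2) + ∑ i, f i * vb i := Finset.sum_add_distrib
  have hfv : f ⬝ᵥ v = ∑ i, f i * v i := rfl
  have hfvb : f ⬝ᵥ vb = ∑ i, f i * vb i := rfl
  have h1 : ςb * ((1/2) * (x ⬝ᵥ B.mulVec x)) - (1/2) * ςb^2 - α * ςb
      ≤ (1/2) * ((1/2) * (x ⬝ᵥ B.mulVec x) - α)^2 := by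
    nlinarith [sq_nonneg ((1/2) * (x ⬝ᵥ B.mulVec x) - α - ςb)]
  have e2 : ((1/2) * (xb ⬝ᵥ B.mulVec xb) - α)^2 = ςb^2 := by rw [eqa]
  have e3 : ςb * (xb ⬝ᵥ B.mulVec xb) = ςb * (2*ςb + 2*α) := by
    rw [show xb ⬝ᵥ B.mulVec xb = 2*ςb + 2*α by linarith]
  have e3' : ςb * (2*ςb + 2*α) = 2*ςb^2 + 2*α*ςb := by ring
  simp only [Pobj]
  rw [hfv, hfvb, e2]
  linarith [h3, hquadx, hquadxb, sumF1, sumF2, sumE1, hsplit1, hsplit2, h1, e3.trans e3']
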